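/- (Theorem 2.1, continuous dependence, maximally extended case.) Let Λ be a metric space, λ₀ ∈ Λ, and F : C([a,b],E) × Λ → C([a,b],E) be such that F(·,λ) is a Volterra operator for each λ ∈ Λ. Assume: (1) there is a neighborhood U₀ of λ₀ on which the family {F(·,λ)}_{λ∈U₀} is uniformly locally contracting with constant q < 1; (2) for every y ∈ C([a,b],E), the map F is continuous at (y, λ₀). If the equation y = F(y,λ₀) has a maximally extended solution y₀ defined on [a,a+ζ) for some ζ ∈ (0, b−a], then for every γ ∈ (0, ζ) there exists a neighborhood U of λ₀ such that for every λ ∈ U the equation y = F(y,λ) has a local solution y_γ(λ) on [a,a+γ], and sup_{t∈[a,a+γ]} ‖y_γ(λ)(t) − y₀(t)‖ → 0 as λ → λ₀. -/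

import Mathlib

open Set Filter Topology

noncomputable section

variable {E : Type*} [NormedAddCommGroup E] [NormedSpace ℝ E] [CompleteSpace E]

/-- The partial sup-norm `‖y‖_ξ = sup_{t ∈ [a, a+ξ]} ‖y t‖` on `C([a,b], E)`. -/
def partNorm (a b ξ : ℝ) (y : C(Set.Icc a b, E)) : ℝ :=
  sSup ((fun t : Set.Icc a b => ‖y t‖) '' {t : Set.Icc a b | (t : ℝ) ≤ a + ξ})

/-- `y₁` and `y₂` agree on `[a, a+ξ]`. -/
def eqUpTo (a b ξ : ℝ) (y₁ y₂ : C(Set.Icc a b, E)) : Prop :=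
  ∀ t : Set.Icc a b, (t : ℝ) ≤ a + ξ → y₁ t = y₂ t

/-- A Volterra operator on `C([a,b], E)` (in the sense of Tikhonov). -/
def IsVolterra (a b : ℝ) (Ψ : C(Set.Icc a b, E) → C(Set.Icc a b, E)) : Prop :=
  ∀ ξ ∈ Set.Ioo (0:ℝ) (b - a), ∀ y₁ y₂ : C(Set.Icc a b, E),
    eqUpTo a b ξ y₁ y₂ → eqUpTo a b ξ (Ψ y₁) (Ψ y₂)

/-- A locally contracting operator with contraction constant `q`. -/
def IsLocallyContracting (a b q : ℝ) (Ψ : C(Set.Icc a b, E) → C(Set.Icc a b, E)) : Prop :=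
  ∀ r > (0:ℝ), ∃ δ > (0:ℝ), ∀ y₁ y₂ : C(Set.Icc a b, E),
    partNorm a b (b - a) y₁ ≤ r → partNorm a b (b - a) y₂ ≤ r →
      (partNorm a b δ (Ψ y₁ - Ψ y₂) ≤ q * partNorm a b δ (y₁ - y₂)) ∧
      (∀ γ ∈ Set.Ioc (0:ℝ) (b - a - δ), eqUpTo a b γ y₁ y₂ →
        partNorm a b (γ + δ) (Ψ y₁ - Ψ y₂) ≤ q * partNorm a b (γ + δ) (y₁ - y₂))

/-- A local solution of `y = Ψ y` on `[a, a+γ]`: a function continuous on `[a, a+γ]`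
admitting a continuous extension `y ∈ C([a,b], E)` with `(Ψ y) t = g t` on `[a, a+γ]`. -/
def IsLocalSolution (a b γ : ℝ) (Ψ : C(Set.Icc a b, E) → C(Set.Icc a b, E))
    (g : ℝ → E) : Prop :=
  0 < γ ∧ γ ≤ b - a ∧ ContinuousOn g (Set.Icc a (a + γ)) ∧
  ∃ y : C(Set.Icc a b, E),
    (∀ t : Set.Icc a b, (t : ℝ) ≤ a + γ → y t = g t) ∧
    (∀ t : Set.Icc a b, (t : ℝ) ≤ a + γ → Ψ y t = g t)

/-- A maximally extended solution of `y = Ψ y` on `[a, a+ζ)`. -/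
def IsMaxExtSolution (a b ζ : ℝ) (Ψ : C(Set.Icc a b, E) → C(Set.Icc a b, E))
    (g : ℝ → E) : Prop :=
  0 < ζ ∧ ζ ≤ b - a ∧ (∀ γ ∈ Set.Ioo (0:ℝ) ζ, IsLocalSolution a b γ Ψ g) ∧
  Tendsto (fun γ => sSup ((fun t => ‖g t‖) '' Set.Icc a (a + γ))) (𝓝[<] ζ) atTop

/-- A family of Volterra operators, uniformly locally contracting on `Λ₀` with constant `q`. -/
def IsUniformlyLocallyContracting {Λ : Type*} (a b q : ℝ) (Λ₀ : Set Λ)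
    (F : C(Set.Icc a b, E) → Λ → C(Set.Icc a b, E)) : Prop :=
  ∀ r > (0:ℝ), ∃ δ > (0:ℝ), ∀ lam ∈ Λ₀, ∀ y₁ y₂ : C(Set.Icc a b, E),
    partNorm a b (b - a) y₁ ≤ r → partNorm a b (b - a) y₂ ≤ r →
      (partNorm a b δ (F y₁ lam - F y₂ lam) ≤ q * partNorm a b δ (y₁ - y₂)) ∧
      (∀ γ ∈ Set.Ioc (0:ℝ) (b - a - δ), eqUpTo a b γ y₁ y₂ →
        partNorm a b (γ + δ) (F y₁ lam - F y₂ lam) ≤ q * partNorm a b (γ + δ) (y₁ - y₂))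

set_option linter.unusedSectionVars false
section MyAux

variable {a b : ℝ}

lemma my_apply_le_partNorm (ξ : ℝ) (y : C(Set.Icc a b, E)) {t : Set.Icc a b}
    (ht : (t : ℝ) ≤ a + ξ) : ‖y t‖ ≤ partNorm a b ξ y := by
  refine le_csSup ⟨‖y‖, ?_⟩ ⟨t, ht, rfl⟩
  rintro x ⟨u, -, rfl⟩; exact y.norm_coe_le_norm u

lemma my_partNorm_le {ξ : ℝ} (y : C(Set.Icc a b, E)) {c : ℝ} (hc : 0 ≤ c)
    (h : ∀ t : Set.Icc a b, (t : ℝ) ≤ a + ξ → ‖y t‖ ≤ c) : partNorm a b ξ y ≤ c :=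
  Real.sSup_le (by rintro x ⟨u, hu, rfl⟩; exact h u hu) hc

lemma my_partNorm_nonneg (hab : a ≤ b) {ξ : ℝ} (hξ : 0 ≤ ξ) (y : C(Set.Icc a b, E)) :
    0 ≤ partNorm a b ξ y :=
  (norm_nonneg _).trans (my_apply_le_partNorm ξ y (t := ⟨a, left_mem_Icc.2 hab⟩) (by simp [hξ]))

lemma my_partNorm_le_norm (ξ : ℝ) (y : C(Set.Icc a b, E)) : partNorm a b ξ y ≤ ‖y‖ :=
  Real.sSup_le (by rintro x ⟨u, -, rfl⟩; exact y.norm_coe_le_norm u) (norm_nonneg _)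

lemma my_partNorm_mono (hab : a ≤ b) {ξ ξ' : ℝ} (hξ' : 0 ≤ ξ') (hξξ' : ξ ≤ ξ')
    (y : C(Set.Icc a b, E)) : partNorm a b ξ y ≤ partNorm a b ξ' y :=
  my_partNorm_le y (my_partNorm_nonneg hab hξ' y)
    (fun t ht => my_apply_le_partNorm ξ' y (by linarith))

lemma my_norm_le_partNorm (hab : a ≤ b) {ξ : ℝ} (hξ : b - a ≤ ξ) (y : C(Set.Icc a b, E)) :
    ‖y‖ ≤ partNorm a b ξ y := by
  have h0 : 0 ≤ ξ := le_trans (by linarith) hξ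
  refine (ContinuousMap.norm_le y (my_partNorm_nonneg hab h0 y)).2 fun t => ?_
  exact my_apply_le_partNorm ξ y (by have := t.2.2; linarith)

lemma my_partNorm_eq_norm (hab : a ≤ b) {ξ : ℝ} (hξ : b - a ≤ ξ) (y : C(Set.Icc a b, E)) :
    partNorm a b ξ y = ‖y‖ :=
  le_antisymm (my_partNorm_le_norm ξ y) (my_norm_le_partNorm hab hξ y)

lemma my_partNorm_congr {ξ : ℝ} {y z : C(Set.Icc a b, E)}
    (h : ∀ t : Set.Icc a b, (t : ℝ) ≤ a + ξ → y t = z t) :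
    partNorm a b ξ y = partNorm a b ξ z := by
  unfold partNorm
  congr 1
  exact Set.image_congr (fun t ht => by rw [h t ht])

lemma my_partNorm_add_le (hab : a ≤ b) {ξ : ℝ} (hξ : 0 ≤ ξ) (y z : C(Set.Icc a b, E)) :
    partNorm a b ξ (y + z) ≤ partNorm a b ξ y + partNorm a b ξ z := by
  refine my_partNorm_le _ (add_nonneg (my_partNorm_nonneg hab hξ y) (my_partNorm_nonneg hab hξ z))
    fun t ht => ?_
  calc ‖(y + z) t‖ ≤ ‖y t‖ + ‖z t‖ := by simp [norm_add_le]
    _ ≤ _ := add_le_add (my_apply_le_partNorm _ _ ht) (my_apply_le_partNorm _ _ ht)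

/-- `y` is constant after time `a + s`. -/
def IccStopped (a b : ℝ) (hab : a ≤ b) (s : ℝ) (y : C(Set.Icc a b, E)) : Prop :=
  ∀ t : Set.Icc a b, a + s ≤ (t : ℝ) → y t = y (Set.projIcc a b hab (a + s))

lemma my_coe_projIcc (hab : a ≤ b) {s : ℝ} (h0 : 0 ≤ s) (hs : s ≤ b - a) :
    ((Set.projIcc a b hab (a + s) : Set.Icc a b) : ℝ) = a + s := by
  rw [Set.coe_projIcc]
  rw [min_eq_right (by linarith), max_eq_right (by linarith)]

lemma IccStopped.sub {hab : a ≤ b} {s : ℝ} {y z : C(Set.Icc a b, E)}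
    (hy : IccStopped a b hab s y) (hz : IccStopped a b hab s z) :
    IccStopped a b hab s (y - z) := by
  intro t ht; simp [ContinuousMap.sub_apply, hy t ht, hz t ht]

lemma IccStopped.add {hab : a ≤ b} {s : ℝ} {y z : C(Set.Icc a b, E)}
    (hy : IccStopped a b hab s y) (hz : IccStopped a b hab s z) :
    IccStopped a b hab s (y + z) := by
  intro t ht; simp [ContinuousMap.add_apply, hy t ht, hz t ht]

lemma IccStopped.mono {hab : a ≤ b} {s s' : ℝ} (h0' : 0 ≤ s') (hs' : s' ≤ b - a)
    (hss' : s ≤ s') {y : C(Set.Icc a b, E)} (hy : IccStopped a b hab s y) :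
    IccStopped a b hab s' y := by
  intro t ht
  have h1 := hy t (by linarith)
  have h2 := hy (Set.projIcc a b hab (a + s')) (by rw [my_coe_projIcc hab h0' hs']; linarith)
  rw [h1, h2]

lemma my_partNorm_le_of_stopped (hab : a ≤ b) {s : ℝ} (h0 : 0 ≤ s) (hs : s ≤ b - a)
    {y : C(Set.Icc a b, E)} (hy : IccStopped a b hab s y) (ξ : ℝ) :
    partNorm a b ξ y ≤ partNorm a b s y := by
  refine my_partNorm_le _ (my_partNorm_nonneg hab h0 y) fun t ht => ?_
  rcases le_total ((t : ℝ)) (a + s) with h | h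
  · exact my_apply_le_partNorm _ _ h
  · rw [hy t h]
    exact my_apply_le_partNorm _ _ (by rw [my_coe_projIcc hab h0 hs])

lemma my_norm_le_partNorm_of_stopped (hab : a ≤ b) {s : ℝ} (h0 : 0 ≤ s) (hs : s ≤ b - a)
    {y : C(Set.Icc a b, E)} (hy : IccStopped a b hab s y) : ‖y‖ ≤ partNorm a b s y := by
  have := my_partNorm_le_of_stopped hab h0 hs hy (b - a)
  rwa [my_partNorm_eq_norm hab le_rfl] at this

/-- The stopping map: clamp times at `a + s`. -/
def stopMap (a b : ℝ) (hab : a ≤ b) (s : ℝ) : C(Set.Icc a b, Set.Icc a b) :=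
  ⟨fun t => ⟨max a (min (t : ℝ) (a + s)),
      le_max_left _ _, max_le hab ((min_le_left _ _).trans t.2.2)⟩, by
    exact Continuous.subtype_mk (continuous_const.max (continuous_subtype_val.min continuous_const)) _⟩

def stopC (a b : ℝ) (hab : a ≤ b) (s : ℝ) (y : C(Set.Icc a b, E)) : C(Set.Icc a b, E) :=
  y.comp (stopMap a b hab s)

lemma stopC_apply_of_le {hab : a ≤ b} {s : ℝ} {y : C(Set.Icc a b, E)} {t : Set.Icc a b}
    (ht : (t : ℝ) ≤ a + s) : stopC a b hab s y t = y t := by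
  show y (stopMap a b hab s t) = y t
  congr 1
  exact Subtype.ext (by simp [stopMap, min_eq_left ht, max_eq_right t.2.1])

lemma stopC_stopped (hab : a ≤ b) {s : ℝ} (h0 : 0 ≤ s) (hs : s ≤ b - a)
    (y : C(Set.Icc a b, E)) : IccStopped a b hab s (stopC a b hab s y) := by
  intro t ht
  show y (stopMap a b hab s t) = y (stopMap a b hab s _)
  congr 1
  apply Subtype.ext
  show max a (min (t : ℝ) (a + s)) = max a (min _ (a + s))
  rw [my_coe_projIcc hab h0 hs]
  rw [min_eq_right ht, min_self]

lemma norm_stopC_le (hab : a ≤ b) (s : ℝ) (y : C(Set.Icc a b, E)) :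
    ‖stopC a b hab s y‖ ≤ ‖y‖ := by
  refine (ContinuousMap.norm_le _ (norm_nonneg y)).2 fun t => ?_
  exact y.norm_coe_le_norm _

lemma my_continuous_partNorm (hab : a ≤ b) {ξ : ℝ} (hξ : 0 ≤ ξ) :
    Continuous (fun y : C(Set.Icc a b, E) => partNorm a b ξ y) := by
  have H : ∀ y z : C(Set.Icc a b, E), partNorm a b ξ y ≤ partNorm a b ξ z + ‖y - z‖ := by
    intro y z
    refine my_partNorm_le _ (add_nonneg (my_partNorm_nonneg hab hξ z) (norm_nonneg _))
      fun t ht => ?_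
    calc ‖y t‖ ≤ ‖z t‖ + ‖y t - z t‖ := by
          have := norm_add_le (z t) (y t - z t); simpa using this
      _ ≤ partNorm a b ξ z + ‖y - z‖ := by
          gcongr
          · exact my_apply_le_partNorm _ _ ht
          · exact (y - z).norm_coe_le_norm t
  have : LipschitzWith 1 (fun y : C(Set.Icc a b, E) => partNorm a b ξ y) := by
    refine LipschitzWith.of_dist_le_mul fun y z => ?_
    rw [NNReal.coe_one, one_mul, Real.dist_eq, dist_eq_norm, abs_le]
    constructor
    · have := H z y; rw [norm_sub_rev] at this; linarith
    · have := H y z; linarith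
  exact this.continuous

end MyAux

lemma my_norm_sub_le₂ {E : Type*} [NormedAddCommGroup E] (A B C : E) :
    ‖A - C‖ ≤ ‖A - B‖ + ‖B - C‖ := by
  have h : A - C = (A - B) + (B - C) := by abel
  rw [h]; exact norm_add_le _ _

lemma my_norm_sub_le₃ {E : Type*} [NormedAddCommGroup E] (A B C D : E) :
    ‖A - D‖ ≤ ‖A - B‖ + ‖B - C‖ + ‖C - D‖ := by
  have h : A - D = (A - B) + (B - C) + (C - D) := by abel
  rw [h]
  calc ‖(A - B) + (B - C) + (C - D)‖ ≤ ‖(A - B) + (B - C)‖ + ‖C - D‖ := norm_add_le _ _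
    _ ≤ ‖A - B‖ + ‖B - C‖ + ‖C - D‖ := add_le_add_left (norm_add_le _ _) _

set_option maxHeartbeats 1000000 in
/-- Theorem 2.1, continuous dependence on the parameter: maximally extended case. -/
theorem maxExt_solution_continuous_dependence
    {Λ : Type*} [MetricSpace Λ] (lam₀ : Λ)
    (a b q : ℝ) (hab : a < b) (hq : q < 1)
    (F : C(Set.Icc a b, E) → Λ → C(Set.Icc a b, E))
    (hVol : ∀ lam : Λ, IsVolterra a b (fun y => F y lam))
    (U₀ : Set Λ) (hU₀ : U₀ ∈ 𝓝 lam₀)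
    (hULC : IsUniformlyLocallyContracting a b q U₀ F)
    (hcont : ∀ y : C(Set.Icc a b, E),
      ContinuousAt (fun p : C(Set.Icc a b, E) × Λ => F p.1 p.2) (y, lam₀))
    (ζ : ℝ) (y₀ : ℝ → E) (hy₀ : IsMaxExtSolution a b ζ (fun y => F y lam₀) y₀) :
    ∀ γ ∈ Set.Ioo (0:ℝ) ζ, ∃ U ∈ 𝓝 lam₀, ∃ sol : Λ → ℝ → E,
      (∀ lam ∈ U, IsLocalSolution a b γ (fun y => F y lam) (sol lam)) ∧
      Tendsto (fun lam => sSup ((fun t => ‖sol lam t - y₀ t‖) '' Set.Icc a (a + γ)))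
        (𝓝 lam₀) (𝓝 0) := by
  classical
  have hab' : a ≤ b := hab.le
  obtain ⟨hζ0, hζba, hloc, -⟩ := hy₀
  intro γ hγ
  obtain ⟨hγ0, hγζ⟩ := hγ
  have hγba : γ < b - a := lt_of_lt_of_le hγζ hζba
  -- the slightly larger interval where y₀ is a solution
  set γ' := (γ + ζ) / 2 with hγ'def
  have hγγ' : γ < γ' := by simp only [hγ'def]; linarith
  have hγ'ζ : γ' < ζ := by simp only [hγ'def]; linarith
  have hγ'0 : 0 < γ' := lt_trans hγ0 hγγ'
  obtain ⟨-, -, -, Y₀, hY₀eq, hY₀sol⟩ := hloc γ' ⟨hγ'0, hγ'ζ⟩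
  have hfix : ∀ t : Set.Icc a b, (t : ℝ) ≤ a + γ' → F Y₀ lam₀ t = Y₀ t :=
    fun t ht => (hY₀sol t ht).trans (hY₀eq t ht).symm
  -- constants
  set r := ‖Y₀‖ + 2 with hrdef
  have hr : 0 < r := by positivity
  obtain ⟨δ₀, hδ₀, hC⟩ := hULC r hr
  set Q := max q 0 with hQdef
  have hQ0 : 0 ≤ Q := le_max_right q 0
  have hQ1 : Q < 1 := max_lt hq one_pos
  set εbar := (1 - Q) / 2 with hεbardef
  have hεbar0 : 0 < εbar := by simp only [hεbardef]; linarith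
  have hεbar1 : εbar ≤ 1 := by simp only [hεbardef]; linarith
  -- raw one-step contraction estimate
  have hD : ∀ lam ∈ U₀, ∀ y₁ y₂ : C(Set.Icc a b, E), ‖y₁‖ ≤ r → ‖y₂‖ ≤ r →
      ∀ s' : ℝ, 0 ≤ s' → s' < b - a → (s' = 0 ∨ eqUpTo a b s' y₁ y₂) →
      partNorm a b (min (s' + δ₀) (b - a)) (F y₁ lam - F y₂ lam) ≤
        Q * partNorm a b (min (s' + δ₀) (b - a)) (y₁ - y₂) := by
    intro lam hlam y₁ y₂ h1 h2 s' hs0 hsba hcond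
    obtain ⟨hq1, hq2⟩ := hC lam hlam y₁ y₂
      (by rwa [my_partNorm_eq_norm hab' le_rfl]) (by rwa [my_partNorm_eq_norm hab' le_rfl])
    have hq1' : partNorm a b δ₀ (F y₁ lam - F y₂ lam) ≤ Q * partNorm a b δ₀ (y₁ - y₂) :=
      hq1.trans (mul_le_mul_of_nonneg_right (le_max_left q 0)
        (my_partNorm_nonneg hab' hδ₀.le _))
    rcases hs0.eq_or_lt with h|hs0'
    · -- s' = 0
      subst h
      rw [zero_add]
      rcases le_total δ₀ (b - a) with hle|hge
      · rw [min_eq_left hle]; exact hq1'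
      · rw [min_eq_right hge]
        calc partNorm a b (b - a) (F y₁ lam - F y₂ lam)
            ≤ partNorm a b δ₀ (F y₁ lam - F y₂ lam) :=
              my_partNorm_mono hab' hδ₀.le hge _
          _ ≤ Q * partNorm a b δ₀ (y₁ - y₂) := hq1'
          _ = Q * partNorm a b (b - a) (y₁ - y₂) := by
              rw [my_partNorm_eq_norm hab' hge, my_partNorm_eq_norm hab' le_rfl]
    · have heq : eqUpTo a b s' y₁ y₂ := hcond.resolve_left (by linarith)
      rcases le_or_gt (s' + δ₀) (b - a) with hle|hgt
      · rw [min_eq_left hle]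
        exact (hq2 s' ⟨hs0', by linarith⟩ heq).trans
          (mul_le_mul_of_nonneg_right (le_max_left q 0)
            (my_partNorm_nonneg hab' (by linarith) _))
      · rw [min_eq_right hgt.le]
        rcases le_or_gt (b - a) δ₀ with hge|hlt
        · calc partNorm a b (b - a) (F y₁ lam - F y₂ lam)
              ≤ partNorm a b δ₀ (F y₁ lam - F y₂ lam) :=
                my_partNorm_mono hab' hδ₀.le hge _
            _ ≤ Q * partNorm a b δ₀ (y₁ - y₂) := hq1'
            _ = Q * partNorm a b (b - a) (y₁ - y₂) := by
                rw [my_partNorm_eq_norm hab' hge, my_partNorm_eq_norm hab' le_rfl]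
        · set s'' := b - a - δ₀ with hs''def
          have hs''0 : 0 < s'' := by simp only [hs''def]; linarith
          have hs''s' : s'' ≤ s' := by simp only [hs''def]; linarith
          have heq'' : eqUpTo a b s'' y₁ y₂ := fun t ht => heq t (by linarith)
          have := hq2 s'' ⟨hs''0, hs''def.le⟩ heq''
          have hsum : s'' + δ₀ = b - a := by simp only [hs''def]; ring
          rw [hsum] at this
          exact this.trans (mul_le_mul_of_nonneg_right (le_max_left q 0)
            (my_partNorm_nonneg hab' (by linarith) _))
  -- wrapper with window reduction for stopped functions
  have hD' : ∀ lam ∈ U₀, ∀ y₁ y₂ : C(Set.Icc a b, E), ‖y₁‖ ≤ r → ‖y₂‖ ≤ r →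
      ∀ s' τ σ : ℝ, 0 ≤ s' → s' < b - a → (s' = 0 ∨ eqUpTo a b s' y₁ y₂) →
      0 < τ → τ ≤ min (s' + δ₀) (b - a) → (σ ≤ τ ∨ min (s' + δ₀) (b - a) ≤ τ) →
      0 ≤ σ → σ ≤ b - a →
      IccStopped a b hab' σ y₁ → IccStopped a b hab' σ y₂ →
      partNorm a b τ (F y₁ lam - F y₂ lam) ≤ Q * partNorm a b τ (y₁ - y₂) := by
    intro lam hlam y₁ y₂ h1 h2 s' τ σ hs0 hsba hcond hτ0 hτμ hστ hσ0 hσba hst1 hst2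
    set μ := min (s' + δ₀) (b - a) with hμdef
    have hμ0 : 0 ≤ μ := le_trans hτ0.le hτμ
    have hraw := hD lam hlam y₁ y₂ h1 h2 s' hs0 hsba hcond
    have hred : partNorm a b μ (y₁ - y₂) ≤ partNorm a b τ (y₁ - y₂) := by
      rcases hστ with hστ|hμτ
      · calc partNorm a b μ (y₁ - y₂) ≤ partNorm a b σ (y₁ - y₂) :=
            my_partNorm_le_of_stopped hab' hσ0 hσba (hst1.sub hst2) μ
          _ ≤ partNorm a b τ (y₁ - y₂) := my_partNorm_mono hab' hτ0.le hστ _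
      · rw [le_antisymm hτμ hμτ]
    calc partNorm a b τ (F y₁ lam - F y₂ lam)
        ≤ partNorm a b μ (F y₁ lam - F y₂ lam) := my_partNorm_mono hab' hμ0 hτμ _
      _ ≤ Q * partNorm a b μ (y₁ - y₂) := hraw
      _ ≤ Q * partNorm a b τ (y₁ - y₂) := mul_le_mul_of_nonneg_left hred hQ0
  -- joint continuity helper
  have hcont' : ∀ w : C(Set.Icc a b, E), ∀ e > (0:ℝ), ∃ θ > (0:ℝ),
      ∀ (v : C(Set.Icc a b, E)) (lam : Λ), ‖v - w‖ < θ → dist lam lam₀ < θ →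
        ‖F v lam - F w lam₀‖ ≤ e := by
    intro w e he
    obtain ⟨θ, hθ, H⟩ := Metric.continuousAt_iff.1 (hcont w) e he
    refine ⟨θ, hθ, fun v lam h1 h2 => ?_⟩
    have := H (x := (v, lam)) (by
      rw [Prod.dist_eq]
      exact max_lt (by rwa [dist_eq_norm]) h2)
    rw [dist_eq_norm] at this
    exact this.le
  -- the main fixed-point step
  have hMain : ∀ lam ∈ U₀, ∀ s' τ : ℝ, 0 ≤ s' → s' ≤ τ → 0 < τ → τ ≤ s' + δ₀ → τ ≤ γ →
      ∀ v : C(Set.Icc a b, E), IccStopped a b hab' τ v →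
      (s' = 0 ∨ eqUpTo a b s' (F v lam) v) →
      ∀ ε'' εc ε : ℝ, 0 ≤ ε'' → 0 ≤ εc → 0 < ε →
      ‖v - stopC a b hab' τ Y₀‖ ≤ ε'' →
      ‖F v lam - F (stopC a b hab' τ Y₀) lam₀‖ ≤ εc →
      Q + εc + ε'' ≤ 1 → Q * ε'' + εc ≤ (1 - Q) * ε →
      ∃ z : C(Set.Icc a b, E), IccStopped a b hab' τ z ∧ eqUpTo a b τ (F z lam) z ∧
        partNorm a b τ (z - Y₀) ≤ ε := by
    intro lam hlam s' τ hs'0 hs'τ hτ0 hτδ hτγ v hvstop hvsol ε'' εc ε hε''0 hεc0 hε0 hvd he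
      hsum htarget
    set w' := stopC a b hab' τ Y₀ with hw'def
    have hτba : τ ≤ b - a := by linarith
    have hτba' : τ < b - a := by linarith
    have hs'ba : s' < b - a := by linarith
    have hw'stop : IccStopped a b hab' τ w' := stopC_stopped hab' hτ0.le hτba Y₀
    have hw'pref : ∀ t : Set.Icc a b, (t : ℝ) ≤ a + τ → w' t = Y₀ t :=
      fun t ht => stopC_apply_of_le ht
    have hw'norm : ‖w'‖ ≤ ‖Y₀‖ := norm_stopC_le hab' τ Y₀
    have hw'fix : ∀ t : Set.Icc a b, (t : ℝ) ≤ a + τ → F w' lam₀ t = w' t := by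
      intro t ht
      have h1 : F w' lam₀ t = F Y₀ lam₀ t :=
        hVol lam₀ τ ⟨hτ0, hτba'⟩ w' Y₀ (fun u hu => hw'pref u hu) t ht
      rw [h1, hfix t (by linarith), hw'pref t ht]
    have hε''1 : ε'' ≤ 1 := by linarith
    have hvnorm : ‖v‖ ≤ ‖Y₀‖ + 1 := by
      have h : v = w' + (v - w') := by abel
      calc ‖v‖ = ‖w' + (v - w')‖ := by rw [← h]
        _ ≤ ‖w'‖ + ‖v - w'‖ := norm_add_le _ _
        _ ≤ ‖Y₀‖ + 1 := add_le_add hw'norm (hvd.trans hε''1)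
    have hvr : ‖v‖ ≤ r := by rw [hrdef]; linarith
    -- the space of the fixed point problem
    set X : Set C(Set.Icc a b, E) :=
      {y | IccStopped a b hab' τ y ∧ (s' = 0 ∨ eqUpTo a b s' y v) ∧
        partNorm a b τ (y - v) ≤ 1} with hXdef
    have hX1 : IsClosed {y : C(Set.Icc a b, E) | IccStopped a b hab' τ y} := by
      have hset : {y : C(Set.Icc a b, E) | IccStopped a b hab' τ y} =
          ⋂ t : Set.Icc a b, {y : C(Set.Icc a b, E) |
            a + τ ≤ (t : ℝ) → y t = y (Set.projIcc a b hab' (a + τ))} := by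
        ext y; simp only [Set.mem_setOf_eq, Set.mem_iInter]; rfl
      rw [hset]
      refine isClosed_iInter fun t => ?_
      by_cases ht : a + τ ≤ (t : ℝ)
      · have : {y : C(Set.Icc a b, E) |
            a + τ ≤ (t : ℝ) → y t = y (Set.projIcc a b hab' (a + τ))} =
            {y : C(Set.Icc a b, E) | y t = y (Set.projIcc a b hab' (a + τ))} := by
          ext y; simp [ht]
        rw [this]
        exact isClosed_eq (continuous_eval_const t)
          (continuous_eval_const _)
      · have : {y : C(Set.Icc a b, E) |
            a + τ ≤ (t : ℝ) → y t = y (Set.projIcc a b hab' (a + τ))} = Set.univ := by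
          ext y; simp [ht]
        rw [this]; exact isClosed_univ
    have hX2 : IsClosed {y : C(Set.Icc a b, E) | s' = 0 ∨ eqUpTo a b s' y v} := by
      by_cases hs0 : s' = 0
      · have : {y : C(Set.Icc a b, E) | s' = 0 ∨ eqUpTo a b s' y v} = Set.univ := by
          ext y; simp [hs0]
        rw [this]; exact isClosed_univ
      · have : {y : C(Set.Icc a b, E) | s' = 0 ∨ eqUpTo a b s' y v} =
            ⋂ t : Set.Icc a b, {y : C(Set.Icc a b, E) | (t : ℝ) ≤ a + s' → y t = v t} := by
          ext y
          simp only [Set.mem_setOf_eq, Set.mem_iInter, or_iff_right hs0]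
          rfl
        rw [this]
        refine isClosed_iInter fun t => ?_
        by_cases ht : (t : ℝ) ≤ a + s'
        · have : {y : C(Set.Icc a b, E) | (t : ℝ) ≤ a + s' → y t = v t} =
              {y : C(Set.Icc a b, E) | y t = v t} := by ext y; simp [ht]
          rw [this]
          exact isClosed_eq (continuous_eval_const t) continuous_const
        · have : {y : C(Set.Icc a b, E) | (t : ℝ) ≤ a + s' → y t = v t} = Set.univ := by
            ext y; simp [ht]
          rw [this]; exact isClosed_univ
    have hX3 : IsClosed {y : C(Set.Icc a b, E) | partNorm a b τ (y - v) ≤ 1} := by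
      have hcm : Continuous fun y : C(Set.Icc a b, E) => partNorm a b τ (y - v) :=
        (my_continuous_partNorm hab' hτ0.le).comp (continuous_id.sub continuous_const)
      exact isClosed_Iic.preimage hcm
    have hXc : IsClosed X := hX1.inter (hX2.inter hX3)
    have hvX : v ∈ X := by
      refine ⟨hvstop, Or.inr fun t ht => rfl, ?_⟩
      rw [sub_self]
      exact my_partNorm_le _ one_pos.le fun t _ => by simp
    have hball : ∀ y ∈ X, ‖y‖ ≤ r := by
      intro y hy
      have h1 : ‖y‖ ≤ partNorm a b τ y := my_norm_le_partNorm_of_stopped hab' hτ0.le hτba hy.1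
      have h2 : partNorm a b τ y ≤ partNorm a b τ (y - v) + partNorm a b τ v := by
        have h := my_partNorm_add_le hab' hτ0.le (y - v) v
        rwa [sub_add_cancel] at h
      have h3 : partNorm a b τ v ≤ ‖v‖ := my_partNorm_le_norm _ _
      rw [hrdef]; linarith [hy.2.2, hvnorm]
    have hDapp : ∀ y₁ y₂ : C(Set.Icc a b, E), ‖y₁‖ ≤ r → ‖y₂‖ ≤ r →
        IccStopped a b hab' τ y₁ → IccStopped a b hab' τ y₂ →
        (s' = 0 ∨ eqUpTo a b s' y₁ y₂) →
        partNorm a b τ (F y₁ lam - F y₂ lam) ≤ Q * partNorm a b τ (y₁ - y₂) :=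
      fun y₁ y₂ hb1 hb2 hst1 hst2 hcnd =>
        hD' lam hlam y₁ y₂ hb1 hb2 s' τ τ hs'0 hs'ba hcnd hτ0
          (le_min hτδ hτba) (Or.inl le_rfl) hτ0.le hτba hst1 hst2
    have hcondpair : ∀ y₁ ∈ X, ∀ y₂ ∈ X, (s' = 0 ∨ eqUpTo a b s' y₁ y₂) := by
      intro y₁ hy₁ y₂ hy₂
      rcases hy₁.2.1 with h0|h1
      · exact Or.inl h0
      · rcases hy₂.2.1 with h0|h2
        · exact Or.inl h0
        · exact Or.inr fun t ht => (h1 t ht).trans (h2 t ht).symm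
    have hTmem : ∀ y ∈ X, stopC a b hab' τ (F y lam) ∈ X := by
      intro y hy
      have hyb : ‖y‖ ≤ r := hball y hy
      refine ⟨stopC_stopped hab' hτ0.le hτba _, ?_, ?_⟩
      · by_cases hs0 : s' = 0
        · exact Or.inl hs0
        · refine Or.inr fun t ht => ?_
          have hs'pos : 0 < s' := hs'0.lt_of_ne (Ne.symm hs0)
          have hts : (t : ℝ) ≤ a + τ := by linarith
          rw [stopC_apply_of_le hts]
          have hyeq : eqUpTo a b s' y v := hy.2.1.resolve_left hs0
          have h1 : F y lam t = F v lam t :=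
            hVol lam s' ⟨hs'pos, hs'ba⟩ y v hyeq t ht
          rw [h1]
          exact (hvsol.resolve_left hs0) t ht
      · refine my_partNorm_le _ one_pos.le fun t ht => ?_
        simp only [ContinuousMap.sub_apply]
        rw [stopC_apply_of_le ht]
        have hT1 : ‖F y lam t - F v lam t‖ ≤ Q * 1 := by
          calc ‖F y lam t - F v lam t‖ = ‖(F y lam - F v lam) t‖ := by
                simp [ContinuousMap.sub_apply]
            _ ≤ partNorm a b τ (F y lam - F v lam) := my_apply_le_partNorm _ _ ht
            _ ≤ Q * partNorm a b τ (y - v) :=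
                hDapp y v hyb hvr hy.1 hvstop (hcondpair y hy v hvX)
            _ ≤ Q * 1 := mul_le_mul_of_nonneg_left hy.2.2 hQ0
        have hT2 : ‖F v lam t - F w' lam₀ t‖ ≤ εc := by
          calc ‖F v lam t - F w' lam₀ t‖ = ‖(F v lam - F w' lam₀) t‖ := by
                simp [ContinuousMap.sub_apply]
            _ ≤ ‖F v lam - F w' lam₀‖ := (F v lam - F w' lam₀).norm_coe_le_norm t
            _ ≤ εc := he
        have hT3 : ‖F w' lam₀ t - v t‖ ≤ ε'' := by
          rw [hw'fix t ht]
          calc ‖w' t - v t‖ = ‖(w' - v) t‖ := by simp [ContinuousMap.sub_apply]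
            _ ≤ ‖w' - v‖ := (w' - v).norm_coe_le_norm t
            _ = ‖v - w'‖ := norm_sub_rev _ _
            _ ≤ ε'' := hvd
        calc ‖F y lam t - v t‖
            ≤ ‖F y lam t - F v lam t‖ + ‖F v lam t - F w' lam₀ t‖ + ‖F w' lam₀ t - v t‖ :=
              my_norm_sub_le₃ _ _ _ _
          _ ≤ Q * 1 + εc + ε'' := by gcongr
          _ ≤ 1 := by linarith
    haveI hXne : Nonempty X := ⟨⟨v, hvX⟩⟩
    haveI := hXc.completeSpace_coe
    set f : X → X := fun y => ⟨stopC a b hab' τ (F (y : C(Set.Icc a b, E)) lam),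
      hTmem _ y.2⟩ with hfdef
    have hcontr : ContractingWith ⟨Q, hQ0⟩ f := by
      constructor
      · exact NNReal.coe_lt_coe.mp (by exact hQ1)
      · refine LipschitzWith.of_dist_le_mul fun x y => ?_
        rw [Subtype.dist_eq, Subtype.dist_eq, dist_eq_norm, dist_eq_norm]
        show ‖stopC a b hab' τ (F (x : C(Set.Icc a b, E)) lam) -
          stopC a b hab' τ (F (y : C(Set.Icc a b, E)) lam)‖ ≤ _
        have hst : IccStopped a b hab' τ (stopC a b hab' τ (F (x : C(Set.Icc a b, E)) lam) -
            stopC a b hab' τ (F (y : C(Set.Icc a b, E)) lam)) :=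
          (stopC_stopped hab' hτ0.le hτba _).sub (stopC_stopped hab' hτ0.le hτba _)
        have h1 := my_norm_le_partNorm_of_stopped hab' hτ0.le hτba hst
        have h2 : partNorm a b τ (stopC a b hab' τ (F (x : C(Set.Icc a b, E)) lam) -
            stopC a b hab' τ (F (y : C(Set.Icc a b, E)) lam)) =
            partNorm a b τ (F (x : C(Set.Icc a b, E)) lam - F (y : C(Set.Icc a b, E)) lam) :=
          my_partNorm_congr fun t ht => by
            simp [ContinuousMap.sub_apply, stopC_apply_of_le ht]
        have h3 := hDapp _ _ (hball _ x.2) (hball _ y.2) x.2.1 y.2.1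
          (hcondpair _ x.2 _ y.2)
        have h4 : partNorm a b τ ((x : C(Set.Icc a b, E)) - (y : C(Set.Icc a b, E))) ≤
            ‖(x : C(Set.Icc a b, E)) - (y : C(Set.Icc a b, E))‖ := my_partNorm_le_norm _ _
        calc ‖stopC a b hab' τ (F (x : C(Set.Icc a b, E)) lam) -
              stopC a b hab' τ (F (y : C(Set.Icc a b, E)) lam)‖
            ≤ partNorm a b τ (F (x : C(Set.Icc a b, E)) lam -
                F (y : C(Set.Icc a b, E)) lam) := by rw [← h2]; exact h1
          _ ≤ Q * partNorm a b τ ((x : C(Set.Icc a b, E)) - (y : C(Set.Icc a b, E))) := h3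
          _ ≤ Q * ‖(x : C(Set.Icc a b, E)) - (y : C(Set.Icc a b, E))‖ :=
              mul_le_mul_of_nonneg_left h4 hQ0
    set zX := ContractingWith.fixedPoint f hcontr with hzXdef
    have hzfix := hcontr.fixedPoint_isFixedPt
    set z : C(Set.Icc a b, E) := (zX : C(Set.Icc a b, E)) with hzdef
    have hz : stopC a b hab' τ (F z lam) = z := congrArg Subtype.val hzfix
    have hzX : z ∈ X := zX.2
    have hzsol : eqUpTo a b τ (F z lam) z := by
      intro t ht
      conv_rhs => rw [← hz]
      exact (stopC_apply_of_le ht).symm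
    refine ⟨z, hzX.1, hzsol, ?_⟩
    have hzb : ‖z‖ ≤ r := hball z hzX
    have hE1 : partNorm a b τ (z - v) ≤ partNorm a b τ (z - Y₀) + ε'' := by
      refine my_partNorm_le _
        (add_nonneg (my_partNorm_nonneg hab' hτ0.le _) hε''0) fun t ht => ?_
      simp only [ContinuousMap.sub_apply]
      have hY : ‖Y₀ t - v t‖ ≤ ε'' := by
        rw [← hw'pref t ht]
        calc ‖w' t - v t‖ = ‖(w' - v) t‖ := by simp [ContinuousMap.sub_apply]
          _ ≤ ‖w' - v‖ := (w' - v).norm_coe_le_norm t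
          _ = ‖v - w'‖ := norm_sub_rev _ _
          _ ≤ ε'' := hvd
      calc ‖z t - v t‖ ≤ ‖z t - Y₀ t‖ + ‖Y₀ t - v t‖ := my_norm_sub_le₂ _ _ _
        _ ≤ partNorm a b τ (z - Y₀) + ε'' := by
            gcongr
            calc ‖z t - Y₀ t‖ = ‖(z - Y₀) t‖ := by simp [ContinuousMap.sub_apply]
              _ ≤ partNorm a b τ (z - Y₀) := my_apply_le_partNorm _ _ ht
    have hE2 : partNorm a b τ (F z lam - F v lam) ≤ Q * partNorm a b τ (z - v) :=
      hDapp z v hzb hvr hzX.1 hvstop (hcondpair z hzX v hvX)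
    have hE3 : partNorm a b τ (z - Y₀) ≤ partNorm a b τ (F z lam - F v lam) + εc := by
      refine my_partNorm_le _
        (add_nonneg (my_partNorm_nonneg hab' hτ0.le _) hεc0) fun t ht => ?_
      simp only [ContinuousMap.sub_apply]
      have hz1 : z t = F z lam t := (hzsol t ht).symm
      have hY : ‖F v lam t - Y₀ t‖ ≤ εc := by
        rw [← hw'pref t ht, ← hw'fix t ht]
        calc ‖F v lam t - F w' lam₀ t‖ = ‖(F v lam - F w' lam₀) t‖ := by
              simp [ContinuousMap.sub_apply]
          _ ≤ ‖F v lam - F w' lam₀‖ := (F v lam - F w' lam₀).norm_coe_le_norm t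
          _ ≤ εc := he
      calc ‖z t - Y₀ t‖ = ‖F z lam t - Y₀ t‖ := by rw [← hz1]
        _ ≤ ‖F z lam t - F v lam t‖ + ‖F v lam t - Y₀ t‖ := my_norm_sub_le₂ _ _ _
        _ ≤ partNorm a b τ (F z lam - F v lam) + εc := by
            gcongr
            calc ‖F z lam t - F v lam t‖ = ‖(F z lam - F v lam) t‖ := by
                  simp [ContinuousMap.sub_apply]
              _ ≤ partNorm a b τ (F z lam - F v lam) := my_apply_le_partNorm _ _ ht
    have hd : partNorm a b τ (z - Y₀) ≤ Q * (partNorm a b τ (z - Y₀) + ε'') + εc := by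
      have h5 : Q * partNorm a b τ (z - v) ≤ Q * (partNorm a b τ (z - Y₀) + ε'') :=
        mul_le_mul_of_nonneg_left hE1 hQ0
      linarith
    have h1Q : 0 < 1 - Q := by linarith
    have hexp : Q * (partNorm a b τ (z - Y₀) + ε'') =
        Q * partNorm a b τ (z - Y₀) + Q * ε'' := by ring
    have hkey : (1 - Q) * partNorm a b τ (z - Y₀) ≤ (1 - Q) * ε := by
      have hring : (1 - Q) * partNorm a b τ (z - Y₀) =
          partNorm a b τ (z - Y₀) - Q * partNorm a b τ (z - Y₀) := by ring
      linarith
    exact (mul_le_mul_iff_right₀ h1Q).mp hkey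
  -- iterate the fixed point step to cover [a, a+γ]
  have hε1 : ∀ {ε : ℝ}, ε ≤ εbar → ε ≤ 1 := fun h => h.trans hεbar1
  have main : ∀ k : ℕ, ∀ ε : ℝ, 0 < ε → ε ≤ εbar →
      ∃ U ∈ 𝓝 lam₀, U ⊆ U₀ ∧ ∀ lam ∈ U, ∃ z : C(Set.Icc a b, E),
        IccStopped a b hab' (min (((k : ℝ) + 1) * δ₀) γ) z ∧
        eqUpTo a b (min (((k : ℝ) + 1) * δ₀) γ) (F z lam) z ∧
        partNorm a b (min (((k : ℝ) + 1) * δ₀) γ) (z - Y₀) ≤ ε := by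
    intro k
    induction k with
    | zero =>
      intro ε hε0 hεb
      have hτeq : min ((((0 : ℕ) : ℝ) + 1) * δ₀) γ = min δ₀ γ := by norm_num
      rw [hτeq]
      set τ := min δ₀ γ with hτdef
      have hτ0 : 0 < τ := lt_min hδ₀ hγ0
      have hτγ : τ ≤ γ := min_le_right _ _
      have hτδ : τ ≤ 0 + δ₀ := by rw [zero_add]; exact min_le_left _ _
      have hεc0 : 0 < (1 - Q) * ε := mul_pos (by linarith) hε0
      obtain ⟨θ, hθ0, hθ⟩ := hcont' (stopC a b hab' τ Y₀) ((1 - Q) * ε) hεc0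
      refine ⟨U₀ ∩ Metric.ball lam₀ θ, Filter.inter_mem hU₀ (Metric.ball_mem_nhds _ hθ0),
        Set.inter_subset_left, ?_⟩
      rintro lam ⟨hlam, hlamθ⟩
      have he : ‖F (stopC a b hab' τ Y₀) lam - F (stopC a b hab' τ Y₀) lam₀‖ ≤ (1 - Q) * ε :=
        hθ _ lam (by rw [sub_self, norm_zero]; exact hθ0) (Metric.mem_ball.mp hlamθ)
      have hsum : Q + (1 - Q) * ε + 0 ≤ 1 := by
        have h1 : (1 - Q) * ε ≤ (1 - Q) * 1 :=
          mul_le_mul_of_nonneg_left (hε1 hεb) (by linarith)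
        linarith
      have htarget : Q * 0 + (1 - Q) * ε ≤ (1 - Q) * ε := by simp
      exact hMain lam hlam 0 τ le_rfl hτ0.le hτ0 hτδ hτγ (stopC a b hab' τ Y₀)
        (stopC_stopped hab' hτ0.le (by linarith) Y₀) (Or.inl rfl)
        0 ((1 - Q) * ε) ε le_rfl hεc0.le hε0
        (by rw [sub_self]; simp) he hsum htarget
    | succ k ih =>
      intro ε hε0 hεb
      rcases le_or_gt γ (((k : ℝ) + 1) * δ₀) with hcase|hcase
      · obtain ⟨U, hUn, hUs, hU⟩ := ih ε hε0 hεb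
        refine ⟨U, hUn, hUs, fun lam hlam => ?_⟩
        obtain ⟨z, h1, h2, h3⟩ := hU lam hlam
        have heq1 : min (((k : ℝ) + 1) * δ₀) γ = γ := min_eq_right hcase
        have heq2 : min ((((k + 1 : ℕ) : ℝ) + 1) * δ₀) γ = γ := by
          refine min_eq_right (hcase.trans ?_)
          push_cast
          nlinarith [hδ₀.le]
        rw [heq2]
        rw [heq1] at h1 h2 h3
        exact ⟨z, h1, h2, h3⟩
      · set sk : ℝ := ((k : ℝ) + 1) * δ₀ with hskdef
        have hskeq : min sk γ = sk := min_eq_left hcase.le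
        have hsk0 : 0 < sk := by positivity
        set τ := min ((((k + 1 : ℕ) : ℝ) + 1) * δ₀) γ with hτdef
        have hcast : (((k + 1 : ℕ) : ℝ) + 1) * δ₀ = sk + δ₀ := by
          rw [hskdef]; push_cast; ring
        have hτsk : sk ≤ τ := le_min (by rw [hcast]; linarith) hcase.le
        have hτ0 : 0 < τ := lt_of_lt_of_le hsk0 hτsk
        have hτγ : τ ≤ γ := min_le_right _ _
        have hτδ : τ ≤ sk + δ₀ := by rw [hτdef, hcast]; exact min_le_left _ _
        set w' := stopC a b hab' τ Y₀ with hw'def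
        have hεc0 : 0 < (1 - Q) * ε / 2 := by
          apply div_pos (mul_pos (by linarith) hε0) two_pos
        obtain ⟨θ, hθ0, hθ⟩ := hcont' w' ((1 - Q) * ε / 2) hεc0
        set ε'' := min (min (θ / 2) ((1 - Q) * ε / 2)) εbar with hε''def
        have hε''0 : 0 < ε'' := lt_min (lt_min (by linarith) hεc0) hεbar0
        obtain ⟨U', hU'n, hU's, hU'⟩ := ih ε'' hε''0 (min_le_right _ _)
        refine ⟨U' ∩ Metric.ball lam₀ θ,
          Filter.inter_mem hU'n (Metric.ball_mem_nhds _ hθ0),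
          Set.inter_subset_left.trans hU's, ?_⟩
        rintro lam ⟨hlamU', hlamθ⟩
        have hlam : lam ∈ U₀ := hU's hlamU'
        obtain ⟨zk, hzk1, hzk2, hzk3⟩ := hU' lam hlamU'
        rw [show min (((k : ℝ) + 1) * δ₀) γ = sk from hskeq] at hzk1 hzk2 hzk3
        set wk := stopC a b hab' sk Y₀ with hwkdef
        have hskba' : sk < b - a := lt_trans hcase hγba
        have hskba : sk ≤ b - a := hskba'.le
        have hτba : τ ≤ b - a := by linarith [hτγ]
        have hwkpref : ∀ t : Set.Icc a b, (t : ℝ) ≤ a + sk → wk t = Y₀ t :=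
          fun t ht => stopC_apply_of_le ht
        have hw'pref : ∀ t : Set.Icc a b, (t : ℝ) ≤ a + τ → w' t = Y₀ t :=
          fun t ht => stopC_apply_of_le ht
        have hzkwk : ‖zk - wk‖ ≤ ε'' := by
          have hstop : IccStopped a b hab' sk (zk - wk) :=
            hzk1.sub (stopC_stopped hab' hsk0.le hskba Y₀)
          have h1 : ‖zk - wk‖ ≤ partNorm a b sk (zk - wk) :=
            my_norm_le_partNorm_of_stopped hab' hsk0.le hskba hstop
          have h2 : partNorm a b sk (zk - wk) = partNorm a b sk (zk - Y₀) :=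
            my_partNorm_congr fun t ht => by
              simp [ContinuousMap.sub_apply, hwkpref t ht]
          linarith
        set v := zk + (w' - wk) with hvdef
        have hvw' : v - w' = zk - wk := by rw [hvdef]; abel
        have hvd : ‖v - w'‖ ≤ ε'' := by rw [hvw']; exact hzkwk
        have hvstop : IccStopped a b hab' τ v := by
          refine IccStopped.add ?_ ?_
          · exact hzk1.mono hτ0.le hτba hτsk
          · exact (stopC_stopped hab' hτ0.le hτba Y₀).sub
              ((stopC_stopped hab' hsk0.le hskba Y₀).mono hτ0.le hτba hτsk)
        have hvpref : ∀ t : Set.Icc a b, (t : ℝ) ≤ a + sk → v t = zk t := by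
          intro t ht
          have h1 : w' t = Y₀ t := hw'pref t (by linarith)
          have h2 : wk t = Y₀ t := hwkpref t ht
          simp [hvdef, ContinuousMap.add_apply, ContinuousMap.sub_apply, h1, h2]
        have hvsol : eqUpTo a b sk (F v lam) v := by
          intro t ht
          have h1 : F v lam t = F zk lam t :=
            hVol lam sk ⟨hsk0, hskba'⟩ v zk (fun u hu => hvpref u hu) t ht
          rw [h1, hzk2 t ht, hvpref t ht]
        have he : ‖F v lam - F w' lam₀‖ ≤ (1 - Q) * ε / 2 := by
          refine hθ v lam ?_ (Metric.mem_ball.mp hlamθ)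
          have h1 : ε'' ≤ θ / 2 := (min_le_left _ _).trans (min_le_left _ _)
          linarith [hvd]
        have hε''half : ε'' ≤ (1 - Q) * ε / 2 := (min_le_left _ _).trans (min_le_right _ _)
        have hε''bar : ε'' ≤ εbar := min_le_right _ _
        have hsum : Q + (1 - Q) * ε / 2 + ε'' ≤ 1 := by
          have h1 : (1 - Q) * ε ≤ (1 - Q) * 1 :=
            mul_le_mul_of_nonneg_left (hε1 hεb) (by linarith)
          rw [hεbardef] at hε''bar
          linarith
        have htarget : Q * ε'' + (1 - Q) * ε / 2 ≤ (1 - Q) * ε := by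
          have h1 : Q * ε'' ≤ 1 * ε'' := mul_le_mul_of_nonneg_right hQ1.le hε''0.le
          linarith
        exact hMain lam hlam sk τ hsk0.le hτsk hτ0 hτδ hτγ v hvstop (Or.inr hvsol)
          ε'' ((1 - Q) * ε / 2) ε hε''0.le hεc0.le hε0 hvd he hsum htarget
  -- the solution predicate on the full interval [a, a+γ]
  set Sol : Λ → C(Set.Icc a b, E) → Prop := fun lam z =>
    IccStopped a b hab' γ z ∧ eqUpTo a b γ (F z lam) z ∧ partNorm a b γ (z - Y₀) ≤ 1
    with hSoldef
  have hγba'' : γ ≤ b - a := hγba.le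
  have hSolball : ∀ lam z, Sol lam z → ‖z‖ ≤ r := by
    intro lam z hz
    have h1 : ‖z‖ ≤ partNorm a b γ z :=
      my_norm_le_partNorm_of_stopped hab' hγ0.le hγba'' hz.1
    have h2 : partNorm a b γ z ≤ partNorm a b γ (z - Y₀) + partNorm a b γ Y₀ := by
      have h := my_partNorm_add_le hab' hγ0.le (z - Y₀) Y₀
      rwa [sub_add_cancel] at h
    have h3 : partNorm a b γ Y₀ ≤ ‖Y₀‖ := my_partNorm_le_norm _ _
    rw [hrdef]; linarith [hz.2.2]
  obtain ⟨N₀, hN₀⟩ := exists_nat_gt (γ / δ₀)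
  have hNγ : γ ≤ ((N₀ : ℝ) + 1) * δ₀ := by
    have h : γ < (N₀ : ℝ) * δ₀ := by rwa [div_lt_iff₀ hδ₀] at hN₀
    nlinarith [hδ₀.le]
  -- uniqueness of solutions
  have huniq : ∀ lam ∈ U₀, ∀ z z' : C(Set.Icc a b, E), Sol lam z → Sol lam z' → z = z' := by
    intro lam hlam z z' hz hz'
    have hzb := hSolball lam z hz
    have hz'b := hSolball lam z' hz'
    have hstepU : ∀ s' : ℝ, 0 ≤ s' → s' < b - a → (s' = 0 ∨ eqUpTo a b s' z z') →
        eqUpTo a b (min (s' + δ₀) γ) z z' := by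
      intro s' hs'0 hs'ba hcnd
      set τ := min (s' + δ₀) γ with hτdef
      have hτ0 : 0 < τ := lt_min (by linarith) hγ0
      have hτγ : τ ≤ γ := min_le_right _ _
      have hdisj : (γ : ℝ) ≤ τ ∨ min (s' + δ₀) (b - a) ≤ τ := by
        rcases le_total (s' + δ₀) γ with h|h
        · right; rw [hτdef, min_eq_left h, min_eq_left (by linarith)]
        · left; rw [hτdef, min_eq_right h]
      have hτμ : τ ≤ min (s' + δ₀) (b - a) :=
        le_min (min_le_left _ _) (by linarith [hτγ])
      have hcontr := hD' lam hlam z z' hzb hz'b s' τ γ hs'0 hs'ba hcnd hτ0 hτμ hdisj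
        hγ0.le hγba'' hz.1 hz'.1
      have hcongr : partNorm a b τ (z - z') = partNorm a b τ (F z lam - F z' lam) :=
        my_partNorm_congr fun t ht => by
          have h1 : z t = F z lam t := (hz.2.1 t (by linarith [hτγ])).symm
          have h2 : z' t = F z' lam t := (hz'.2.1 t (by linarith [hτγ])).symm
          simp only [ContinuousMap.sub_apply]
          rw [h1, h2]
      have h0 : partNorm a b τ (z - z') ≤ 0 := by
        have hQle : partNorm a b τ (z - z') ≤ Q * partNorm a b τ (z - z') := by
          rw [hcongr]; exact hcontr.trans_eq (by rw [← hcongr])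
        nlinarith [my_partNorm_nonneg hab' hτ0.le (z - z'), hQ1]
      intro t ht
      have happ := my_apply_le_partNorm τ (z - z') (t := t) ht
      have hnorm : ‖(z - z') t‖ ≤ 0 := le_trans happ h0
      have hzero : z t - z' t = 0 := by
        have h := norm_le_zero_iff.mp hnorm
        simpa [ContinuousMap.sub_apply] using h
      exact sub_eq_zero.mp hzero
    have key : ∀ k : ℕ, eqUpTo a b (min (((k : ℝ) + 1) * δ₀) γ) z z' := by
      intro k; induction k with
      | zero =>
        have h := hstepU 0 le_rfl (by linarith) (Or.inl rfl)
        rw [zero_add] at h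
        have heq : min ((((0 : ℕ) : ℝ) + 1) * δ₀) γ = min δ₀ γ := by norm_num
        rw [heq]; exact h
      | succ k ih =>
        rcases le_total γ (((k : ℝ) + 1) * δ₀) with h|h
        · have heq1 : min (((k : ℝ) + 1) * δ₀) γ = γ := min_eq_right h
          have heq2 : min ((((k + 1 : ℕ) : ℝ) + 1) * δ₀) γ = γ := by
            refine min_eq_right (h.trans ?_)
            push_cast
            nlinarith [hδ₀.le]
          rw [heq2]; rw [heq1] at ih; exact ih
        · have heq1 : min (((k : ℝ) + 1) * δ₀) γ = ((k : ℝ) + 1) * δ₀ := min_eq_left h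
          rw [heq1] at ih
          have hs0 : (0 : ℝ) ≤ ((k : ℝ) + 1) * δ₀ := by positivity
          have hsba : ((k : ℝ) + 1) * δ₀ < b - a := lt_of_le_of_lt h hγba
          have hstep := hstepU (((k : ℝ) + 1) * δ₀) hs0 hsba (Or.inr ih)
          have heq2 : ((((k + 1 : ℕ)) : ℝ) + 1) * δ₀ = ((k : ℝ) + 1) * δ₀ + δ₀ := by
            push_cast; ring
          rw [heq2]; exact hstep
    have hkey := key N₀
    rw [min_eq_right hNγ] at hkey
    ext t
    rcases le_total ((t : ℝ)) (a + γ) with ht|ht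
    · exact hkey t ht
    · calc z t = z (Set.projIcc a b hab' (a + γ)) := hz.1 t ht
        _ = z' (Set.projIcc a b hab' (a + γ)) :=
            hkey _ (le_of_eq (my_coe_projIcc hab' hγ0.le hγba''))
        _ = z' t := (hz'.1 t ht).symm
  -- existence with error bounds
  have hex : ∀ ε : ℝ, 0 < ε → ε ≤ εbar → ∃ U ∈ 𝓝 lam₀, U ⊆ U₀ ∧
      ∀ lam ∈ U, ∃ z, Sol lam z ∧ partNorm a b γ (z - Y₀) ≤ ε := by
    intro ε hε0 hεb
    obtain ⟨U, hUn, hUs, hU⟩ := main N₀ ε hε0 hεb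
    refine ⟨U, hUn, hUs, fun lam hlam => ?_⟩
    obtain ⟨z, h1, h2, h3⟩ := hU lam hlam
    rw [min_eq_right hNγ] at h1 h2 h3
    exact ⟨z, ⟨h1, h2, h3.trans (by linarith [hεb.trans hεbar1])⟩, h3⟩
  -- define the solution family by choice
  set sol : Λ → ℝ → E := fun lam =>
    if h : ∃ z, Sol lam z then fun t => h.choose (Set.projIcc a b hab' t) else fun _ => 0
    with hsoldef
  obtain ⟨U1, hU1n, hU1s, hU1⟩ := hex εbar hεbar0 le_rfl
  refine ⟨U1, hU1n, sol, ?_, ?_⟩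
  · -- local solutions on U1
    intro lam hlam
    obtain ⟨z, hz, -⟩ := hU1 lam hlam
    have hch : ∃ z, Sol lam z := ⟨z, hz⟩
    have hcs := hch.choose_spec
    have hsol_eq : sol lam = fun t => hch.choose (Set.projIcc a b hab' t) := by
      simp only [hsoldef]; rw [dif_pos hch]
    refine ⟨hγ0, hγba.le, ?_, hch.choose, ?_, ?_⟩
    · rw [hsol_eq]
      exact (hch.choose.continuous.comp continuous_projIcc).continuousOn
    · intro t ht
      rw [hsol_eq]
      show hch.choose t = hch.choose (Set.projIcc a b hab' ↑t)
      rw [Set.projIcc_of_mem hab' t.2]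
    · intro t ht
      rw [hsol_eq]
      show F hch.choose lam t = hch.choose (Set.projIcc a b hab' ↑t)
      rw [Set.projIcc_of_mem hab' t.2]
      exact hcs.2.1 t ht
  · -- continuous dependence
    rw [Metric.tendsto_nhds]
    intro ε hε
    set ε' := min (ε / 2) εbar with hε'def
    have hε'0 : 0 < ε' := lt_min (by linarith) hεbar0
    obtain ⟨U2, hU2n, hU2s, hU2⟩ := hex ε' hε'0 (min_le_right _ _)
    filter_upwards [hU1n, hU2n] with lam h1 h2
    obtain ⟨z1, hz1, -⟩ := hU1 lam h1
    obtain ⟨z2, hz2, hz2e⟩ := hU2 lam h2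
    have hch : ∃ z, Sol lam z := ⟨z1, hz1⟩
    have hcs := hch.choose_spec
    have hzz : hch.choose = z2 := huniq lam (hU2s h2) _ _ hcs hz2
    have hbound : ∀ x ∈ ((fun t => ‖sol lam t - y₀ t‖) '' Set.Icc a (a + γ)), x ≤ ε' := by
      rintro x ⟨t, htmem, rfl⟩
      have htb : t ∈ Set.Icc a b := ⟨htmem.1, by linarith [htmem.2, hγba]⟩
      have hproj : Set.projIcc a b hab' t = ⟨t, htb⟩ := Set.projIcc_of_mem hab' htb
      have hsol_eq : sol lam t = hch.choose ⟨t, htb⟩ := by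
        simp only [hsoldef]; rw [dif_pos hch, hproj]
      have hy₀' : y₀ t = Y₀ ⟨t, htb⟩ := by
        refine (hY₀eq ⟨t, htb⟩ ?_).symm
        show t ≤ a + γ'
        linarith [htmem.2]
      show ‖sol lam t - y₀ t‖ ≤ ε'
      rw [hsol_eq, hy₀', hzz]
      calc ‖z2 ⟨t, htb⟩ - Y₀ ⟨t, htb⟩‖ = ‖(z2 - Y₀) ⟨t, htb⟩‖ := by
            simp [ContinuousMap.sub_apply]
        _ ≤ partNorm a b γ (z2 - Y₀) :=
            my_apply_le_partNorm _ _ (show ((⟨t, htb⟩ : Set.Icc a b) : ℝ) ≤ a + γ from htmem.2)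
        _ ≤ ε' := hz2e
    have hnn : 0 ≤ sSup ((fun t => ‖sol lam t - y₀ t‖) '' Set.Icc a (a + γ)) :=
      Real.sSup_nonneg (by rintro x ⟨t, -, rfl⟩; exact norm_nonneg _)
    have hle : sSup ((fun t => ‖sol lam t - y₀ t‖) '' Set.Icc a (a + γ)) ≤ ε' :=
      Real.sSup_le hbound hε'0.le
    rw [Real.dist_eq, sub_zero, abs_of_nonneg hnn]
    calc sSup ((fun t => ‖sol lam t - y₀ t‖) '' Set.Icc a (a + γ)) ≤ ε' := hle
      _ ≤ ε / 2 := min_le_left _ _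
      _ < ε := by linarith
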